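/- arXiv:1810.07214 — 17 statements merged into one kernel-verified Lean document; each statement's English description precedes it below -/
import Mathlib

section
/- Let (P, ≤, ') be a poset with a unary operation, and define M(x,y) = L(U(x,y'), y) and R(x,y) = L(U(L(y,x), x')). If P satisfies L(x) ⊆ L(U(L(U(x,y'), y), y')) for all x, y ∈ P, then for all x, y, z ∈ P, M(x,y) ⊆ L(z) implies L(x) ⊆ R(y,z). -/
theorem stmt1 {P : Type*} [PartialOrder P] (f : P → P)
    (h : ∀ x y : P, lowerBounds {x} ⊆
      lowerBounds (upperBounds (lowerBounds (upperBounds {x, f y} ∪ {y}) ∪ {f y}))) :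
    ∀ x y z : P, lowerBounds (upperBounds {x, f y} ∪ {y}) ⊆ lowerBounds {z} →
      lowerBounds {x} ⊆ lowerBounds (upperBounds (lowerBounds {z, y} ∪ {f y})) := by
  intro x y z hM w hw u hu
  apply h x y hw
  intro m hm
  rcases hm with hm | hm
  · exact hu (Or.inl (fun t ht => by
      rcases ht with ht | ht
      · exact ht ▸ hM hm rfl
      · exact ht ▸ hm (Or.inr rfl)))
  · exact hu (Or.inr hm)
end

section
/- Let (P, ≤, ') be a poset with a unary operation, and define M(x,y) = L(U(x,y'), y) and R(x,y) = L(U(L(y,x), x')). If P satisfies L(U(L(x,y), y'), y) ⊆ L(x) for all x, y ∈ P, then for all x, y, z ∈ P, L(x) ⊆ R(y,z) implies M(x,y) ⊆ L(z). -/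
theorem stmt2 {P : Type*} [PartialOrder P] (f : P → P)
    (h : ∀ x y : P, lowerBounds (upperBounds (lowerBounds {x, y} ∪ {f y}) ∪ {y}) ⊆
      lowerBounds {x}) :
    ∀ x y z : P, lowerBounds {x} ⊆ lowerBounds (upperBounds (lowerBounds {z, y} ∪ {f y})) →
      lowerBounds (upperBounds {x, f y} ∪ {y}) ⊆ lowerBounds {z} := by
  intro x y z hx t ht
  apply h z y
  intro u hu
  rcases hu with hu | hu
  · -- u ∈ upperBounds (lowerBounds {z, y} ∪ {f y})
    apply ht
    left
    intro v hv
    rcases hv with hv | hv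
    · -- v = x
      subst hv
      exact hx (fun w hw => hw ▸ le_refl v) hu
    · -- v = f y
      exact hu (Or.inr hv)
  · exact ht (Or.inr hu)
end

section
/- Let (P, ≤, ', 0, 1) be a bounded poset with a unary operation satisfying 1' = 0, L(x) ⊆ L(U(L(U(x,y'), y), y')) for all x, y, and L(U(L(x,y), y'), y) ⊆ L(x) for all x, y. Define M(x,y) = L(U(x,y'), y) and R(x,y) = L(U(L(y,x), x')). Then (P, ≤, ', M, R, 0, 1) is an operator left residuated poset, i.e. (i) M(x,1) = M(1,x) = L(x), (ii) M(x,y) ⊆ L(z) iff L(x) ⊆ R(y,z), and (iii) R(x,0) = L(x'). -/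
open Set

theorem stmt3 {P : Type*} [PartialOrder P] (f : P → P) (z o : P)
    (h0 : ∀ x, z ≤ x) (h1 : ∀ x, x ≤ o)
    (h1' : f o = z)
    (hequ1 : ∀ x y : P, lowerBounds {x} ⊆
      lowerBounds (upperBounds (lowerBounds (upperBounds {x, f y} ∪ {y}) ∪ {f y})))
    (hequ2 : ∀ x y : P, lowerBounds (upperBounds (lowerBounds {x, y} ∪ {f y}) ∪ {y}) ⊆
      lowerBounds {x}) :
    (∀ x : P, lowerBounds (upperBounds {x, f o} ∪ {o}) = lowerBounds {x}
      ∧ lowerBounds (upperBounds {o, f x} ∪ {x}) = lowerBounds {x}) ∧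
    (∀ x y w : P, lowerBounds (upperBounds {x, f y} ∪ {y}) ⊆ lowerBounds {w} ↔
      lowerBounds {x} ⊆ lowerBounds (upperBounds (lowerBounds {w, y} ∪ {f y}))) ∧
    (∀ x : P, lowerBounds (upperBounds (lowerBounds {z, x} ∪ {f x})) = lowerBounds {f x}) := by
  refine ⟨?_, ?_, ?_⟩
  · intro x
    constructor
    · ext w
      simp only [h1', mem_lowerBounds, mem_union, mem_singleton_iff]
      constructor
      · intro h a ha
        rw [ha]
        exact h x (Or.inl (by
          intro b hb
          rcases hb with rfl | hb
          · exact le_rfl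
          · rw [mem_singleton_iff] at hb; rw [hb]; exact h0 _))
      · intro h u hu
        rcases hu with hu | rfl
        · exact le_trans (h x rfl) (hu (Or.inl rfl))
        · exact h1 w
    · ext w
      simp only [mem_lowerBounds, mem_union, mem_singleton_iff]
      constructor
      · intro h a ha
        rw [ha]
        exact h x (Or.inr rfl)
      · intro h u hu
        rcases hu with hu | hu
        · exact le_trans (h1 w) (hu (Or.inl rfl))
        · rw [hu]; exact h x rfl
  · intro x y w
    constructor
    · intro h
      refine subset_trans (hequ1 x y) (lowerBounds_mono_set (upperBounds_mono_set ?_))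
      intro m hm
      rcases hm with hm | hm
      · left
        intro a ha
        rcases ha with rfl | ha
        · exact h hm rfl
        · rw [mem_singleton_iff] at ha; rw [ha]
          exact hm (Or.inr rfl)
      · exact Or.inr hm
    · intro h
      have hx : x ∈ lowerBounds (upperBounds (lowerBounds {w, y} ∪ {f y})) :=
        h (fun a ha => by rw [mem_singleton_iff] at ha; exact ha ▸ le_rfl)
      refine subset_trans ?_ (hequ2 w y)
      refine lowerBounds_mono_set ?_
      intro u hu
      rcases hu with hu | hu
      · left
        intro a ha
        rcases ha with rfl | ha
        · exact hx hu
        · rw [mem_singleton_iff] at ha; rw [ha]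
          exact hu (Or.inr rfl)
      · exact Or.inr hu
  · intro x
    ext u
    simp only [mem_lowerBounds, mem_singleton_iff]
    constructor
    · intro h a ha
      rw [ha]
      exact h (f x) (by
        intro b hb
        rcases hb with hb | hb
        · exact le_trans (hb (Or.inl rfl)) (h0 _)
        · rw [mem_singleton_iff] at hb; rw [hb])
    · intro h v hv
      exact le_trans (h (f x) rfl) (hv (Or.inr rfl))
end

section
/- Every pseudo-orthomodular poset satisfies both L(x) ⊆ L(U(L(U(x,y'), y), y')) and L(U(L(x,y), y'), y) ⊆ L(x) for all x, y. -/
lemma imgL {P : Type*} [PartialOrder P] (f : P → P)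
    (hant : ∀ x y : P, x ≤ y → f y ≤ f x) (hinv : ∀ x : P, f (f x) = x)
    (S : Set P) : f '' lowerBounds S = upperBounds (f '' S) := by
  ext u
  constructor
  · rintro ⟨t, ht, rfl⟩ s ⟨v, hv, rfl⟩
    exact hant _ _ (ht hv)
  · intro hu
    refine ⟨f u, fun s hs => ?_, hinv u⟩
    have h := hant _ _ (hu (Set.mem_image_of_mem f hs))
    rwa [hinv] at h

lemma imgU {P : Type*} [PartialOrder P] (f : P → P)
    (hant : ∀ x y : P, x ≤ y → f y ≤ f x) (hinv : ∀ x : P, f (f x) = x)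
    (S : Set P) : f '' upperBounds S = lowerBounds (f '' S) := by
  ext u
  constructor
  · rintro ⟨t, ht, rfl⟩ s ⟨v, hv, rfl⟩
    exact hant _ _ (ht hv)
  · intro hu
    refine ⟨f u, fun s hs => ?_, hinv u⟩
    have h := hant _ _ (hu (Set.mem_image_of_mem f hs))
    rwa [hinv] at h

lemma dualpo {P : Type*} [PartialOrder P] (f : P → P)
    (hant : ∀ x y : P, x ≤ y → f y ≤ f x) (hinv : ∀ x : P, f (f x) = x)
    (hpo : ∀ x y : P, lowerBounds (upperBounds (lowerBounds {x, y} ∪ {f y}) ∪ {y}) =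
      lowerBounds {x, y})
    (a b : P) :
    upperBounds (lowerBounds (upperBounds {a, b} ∪ {f b}) ∪ {b}) = upperBounds {a, b} := by
  have h := congrArg (f '' ·) (hpo (f a) (f b))
  simp only [imgL f hant hinv, imgU f hant hinv, Set.image_union, Set.image_pair,
    Set.image_singleton, hinv] at h
  exact h

theorem stmt4 {P : Type*} [PartialOrder P] (f : P → P) (z o : P)
    (h0 : ∀ x, z ≤ x) (h1 : ∀ x, x ≤ o)
    (hc1 : ∀ x : P, lowerBounds {x, f x} = {z})
    (hc2 : ∀ x : P, upperBounds {x, f x} = {o})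
    (hant : ∀ x y : P, x ≤ y → f y ≤ f x)
    (hinv : ∀ x : P, f (f x) = x)
    (hpo : ∀ x y : P, lowerBounds (upperBounds (lowerBounds {x, y} ∪ {f y}) ∪ {y}) =
      lowerBounds {x, y}) :
    (∀ x y : P, lowerBounds {x} ⊆
      lowerBounds (upperBounds (lowerBounds (upperBounds {x, f y} ∪ {y}) ∪ {f y}))) ∧
    (∀ x y : P, lowerBounds (upperBounds (lowerBounds {x, y} ∪ {f y}) ∪ {y}) ⊆
      lowerBounds {x}) := by
  constructor
  · intro x y t ht
    have hd := dualpo f hant hinv hpo x (f y)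
    rw [hinv] at hd
    rw [hd]
    intro u hu
    exact le_trans (ht rfl) (hu (Set.mem_insert _ _))
  · intro x y t ht
    rw [hpo] at ht
    intro s hs
    rw [Set.mem_singleton_iff] at hs
    subst hs
    exact ht (Set.mem_insert _ _)
end

section
/- Let (P, ≤, ') be a poset with a unary operation, and define M(x,y) = L(x,y) and R(x,y) = L(U(y,x')). If P satisfies L(x) ⊆ L(U(L(x,y), y')) for all x, y, then for all x, y, z ∈ P, M(x,y) ⊆ L(z) implies L(x) ⊆ R(y,z). -/
theorem stmt5 {P : Type*} [PartialOrder P] (f : P → P)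
    (h : ∀ x y : P, lowerBounds {x} ⊆ lowerBounds (upperBounds (lowerBounds {x, y} ∪ {f y}))) :
    ∀ x y z : P, lowerBounds {x, y} ⊆ lowerBounds {z} →
      lowerBounds {x} ⊆ lowerBounds (upperBounds {z, f y}) := by
  intro x y z hM w hw u hu
  apply h x y hw
  intro v hv
  rcases hv with hv | hv
  · exact le_trans (hM hv rfl) (hu (Or.inl rfl))
  · rw [Set.mem_singleton_iff] at hv
    subst hv
    exact hu (Or.inr rfl)
end

section
/- Let (P, ≤, ') be a poset with a unary operation, and define M(x,y) = L(x,y) and R(x,y) = L(U(y,x')). If P satisfies L(U(x,y'), y) ⊆ L(x) for all x, y, then for all x, y, z ∈ P, L(x) ⊆ R(y,z) implies M(x,y) ⊆ L(z). -/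
theorem stmt6 {P : Type*} [PartialOrder P] (f : P → P)
    (h : ∀ x y : P, lowerBounds (upperBounds {x, f y} ∪ {y}) ⊆ lowerBounds {x}) :
    ∀ x y z : P, lowerBounds {x} ⊆ lowerBounds (upperBounds {z, f y}) →
      lowerBounds {x, y} ⊆ lowerBounds {z} := by
  intro x y z hxz w hw
  have hwx : w ≤ x := hw (by simp)
  have hwy : w ≤ y := hw (by simp)
  apply h z y
  intro u hu
  rcases hu with hu | hu
  · exact hxz (by simpa [lowerBounds] using hwx) hu
  · simp only [Set.mem_singleton_iff] at hu; subst hu; exact hwy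
end

section
/- Let (P, ≤, ', 0, 1) be a bounded poset with a unary operation satisfying L(x) ⊆ L(U(L(x,y), y')) and L(U(x,y'), y) ⊆ L(x) for all x, y. Define M(x,y) = L(x,y) and R(x,y) = L(U(y,x')). Then (P, ≤, ', M, R, 0, 1) is an operator residuated poset: M is commutative, M(x,1) = M(1,x) = L(x), M(x,y) ⊆ L(z) iff L(x) ⊆ R(y,z), and R(x,0) = L(x'). -/
theorem stmt7 {P : Type*} [PartialOrder P] (f : P → P) (z o : P)
    (h0 : ∀ x, z ≤ x) (h1 : ∀ x, x ≤ o)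
    (hequ7 : ∀ x y : P, lowerBounds {x} ⊆
      lowerBounds (upperBounds (lowerBounds {x, y} ∪ {f y})))
    (hequ8 : ∀ x y : P, lowerBounds (upperBounds {x, f y} ∪ {y}) ⊆ lowerBounds {x}) :
    (∀ x y : P, lowerBounds ({x, y} : Set P) = lowerBounds {y, x}) ∧
    (∀ x : P, lowerBounds ({x, o} : Set P) = lowerBounds {x}
      ∧ lowerBounds ({o, x} : Set P) = lowerBounds {x}) ∧
    (∀ x y w : P, lowerBounds {x, y} ⊆ lowerBounds {w} ↔
      lowerBounds {x} ⊆ lowerBounds (upperBounds {w, f y})) ∧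
    (∀ x : P, lowerBounds (upperBounds {z, f x}) = lowerBounds {f x}) := by
  refine ⟨fun x y => by rw [Set.pair_comm], fun x => ?_, fun x y w => ?_, fun x => ?_⟩
  · constructor
    · ext c
      simp only [lowerBounds, Set.mem_insert_iff, Set.mem_singleton_iff, Set.mem_setOf_eq]
      constructor
      · intro h a ha; exact h (Or.inl ha)
      · rintro h a (rfl | rfl)
        · exact h rfl
        · exact h1 c
    · ext c
      simp only [lowerBounds, Set.mem_insert_iff, Set.mem_singleton_iff, Set.mem_setOf_eq]
      constructor
      · intro h a ha; exact h (Or.inr ha)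
      · rintro h a (rfl | rfl)
        · exact h1 c
        · exact h rfl
  · constructor
    · intro hsub c hc
      refine (lowerBounds_mono_set ?_) (hequ7 x y hc)
      · -- upperBounds {w, f y} ⊆ upperBounds (lowerBounds {x, y} ∪ {f y})
        intro u hu a ha
        rcases ha with ha | ha
        · have : a ≤ w := (hsub ha) rfl
          exact this.trans (hu (Or.inl rfl))
        · rcases ha with rfl
          exact hu (Or.inr rfl)
    · intro hsub c hc
      apply hequ8 w y
      intro a ha
      rcases ha with ha | ha
      · exact hsub (fun b hb => by rcases hb with rfl; exact hc (Or.inl rfl)) ha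
      · rcases ha with rfl
        exact hc (Or.inr rfl)
  · ext c
    constructor
    · intro hc
      have hfx : f x ∈ upperBounds ({z, f x} : Set P) := by
        rintro a (rfl | rfl)
        · exact h0 _
        · exact le_refl _
      intro a ha
      rcases ha with rfl
      exact hc hfx
    · intro hc u hu
      have : c ≤ f x := hc rfl
      exact this.trans (hu (Or.inr rfl))
end

section
/- Every pseudo-Boolean poset satisfies both L(x) ⊆ L(U(L(x,y), y')) and L(U(x,y'), y) ⊆ L(x) for all x, y. -/
theorem stmt8 {P : Type*} [PartialOrder P] (f : P → P) (z o : P)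
    (h0 : ∀ x, z ≤ x) (h1 : ∀ x, x ≤ o)
    (hc1 : ∀ x : P, lowerBounds {x, f x} = {z})
    (hc2 : ∀ x : P, upperBounds {x, f x} = {o})
    (hant : ∀ x y : P, x ≤ y → f y ≤ f x)
    (hinv : ∀ x : P, f (f x) = x)
    (hpb : ∀ x y : P, lowerBounds (upperBounds {x, y} ∪ {f y}) = lowerBounds {x, f y}) :
    (∀ x y : P, lowerBounds {x} ⊆ lowerBounds (upperBounds (lowerBounds {x, y} ∪ {f y}))) ∧
    (∀ x y : P, lowerBounds (upperBounds {x, f y} ∪ {y}) ⊆ lowerBounds {x}) := by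
  constructor
  · intro x y t ht u hu
    have htx : t ≤ x := ht (Set.mem_singleton x)
    -- show x ≤ u via the dual of hpb
    have hfy : f y ≤ u := hu (Or.inr rfl)
    have hfu : f u ∈ lowerBounds (upperBounds {f x, f y} ∪ {y}) := by
      rintro v (hv | hv)
      · -- v is an upper bound of {f x, f y}; then f v ∈ lowerBounds {x, y}
        have hfv : f v ∈ lowerBounds ({x, y} : Set P) := by
          rintro w (rfl | rfl)
          · have := hant _ _ (hv (Or.inl rfl)); rwa [hinv] at this
          · have := hant _ _ (hv (Or.inr rfl)); rwa [hinv] at this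
        have : f v ≤ u := hu (Or.inl hfv)
        have := hant _ _ this
        rw [hinv] at this
        exact this
      · rcases hv with rfl
        have := hant _ _ hfy
        rwa [hinv] at this
    have hkey := hpb (f x) (f y)
    rw [hinv] at hkey
    rw [hkey] at hfu
    have : f u ≤ f x := hfu (Or.inl rfl)
    have hxu : x ≤ u := by
      have := hant _ _ this
      rw [hinv, hinv] at this
      exact this
    exact le_trans htx hxu
  · intro x y t ht
    have hkey := hpb x (f y)
    rw [hinv] at hkey
    rw [hkey] at ht
    intro w hw
    rcases hw with rfl
    exact ht (Or.inl rfl)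
end

section
/- In a poset with complementation, the identities L(U(x,y), y') = L(x,y') and U(L(x,y), y') = U(x,y') (for all x, y) are equivalent. -/
theorem stmt9 {P : Type*} [PartialOrder P] (f : P → P) (z o : P)
    (h0 : ∀ x, z ≤ x) (h1 : ∀ x, x ≤ o)
    (hc1 : ∀ x : P, lowerBounds {x, f x} = {z})
    (hc2 : ∀ x : P, upperBounds {x, f x} = {o})
    (hant : ∀ x y : P, x ≤ y → f y ≤ f x)
    (hinv : ∀ x : P, f (f x) = x) :
    (∀ x y : P, lowerBounds (upperBounds {x, y} ∪ {f y}) = lowerBounds {x, f y}) ↔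
    (∀ x y : P, upperBounds (lowerBounds {x, y} ∪ {f y}) = upperBounds {x, f y}) := by
  have key : ∀ (u : P) (S : Set P), u ∈ upperBounds S ↔ f u ∈ lowerBounds (f '' S) := by
    intro u S
    constructor
    · rintro hu a ⟨s, hs, rfl⟩; exact hant _ _ (hu hs)
    · intro hl s hs
      have h := hant _ _ (hl ⟨s, hs, rfl⟩)
      rwa [hinv, hinv] at h
  have key2 : ∀ (l : P) (S : Set P), l ∈ lowerBounds S ↔ f l ∈ upperBounds (f '' S) := by
    intro l S
    constructor
    · rintro hl a ⟨s, hs, rfl⟩; exact hant _ _ (hl hs)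
    · intro hu s hs
      have h := hant _ _ (hu ⟨s, hs, rfl⟩)
      rwa [hinv, hinv] at h
  have imgLow : ∀ S : Set P, f '' lowerBounds S = upperBounds (f '' S) := by
    intro S; ext x; constructor
    · rintro ⟨l, hl, rfl⟩; exact (key2 l S).mp hl
    · intro hx
      refine ⟨f x, ?_, hinv x⟩
      rw [key2, hinv]; exact hx
  have imgUp : ∀ S : Set P, f '' upperBounds S = lowerBounds (f '' S) := by
    intro S; ext x; constructor
    · rintro ⟨l, hl, rfl⟩; exact (key l S).mp hl
    · intro hx
      refine ⟨f x, ?_, hinv x⟩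
      rw [key, hinv]; exact hx
  constructor
  · intro H x y
    ext u
    rw [key u, key u, Set.image_union, Set.image_singleton, imgLow,
        Set.image_pair, Set.image_pair]
    have hy : f (f y) = y := hinv y
    rw [hy]
    have := H (f x) (f y)
    rw [hinv y] at this
    rw [this]
  · intro H x y
    ext u
    rw [key2 u, key2 u, Set.image_union, Set.image_singleton, imgUp,
        Set.image_pair, Set.image_pair]
    have hy : f (f y) = y := hinv y
    rw [hy]
    have := H (f x) (f y)
    rw [hinv y] at this
    rw [this]
end

section
/- In a poset with complementation, the identities L(U(L(x,y), y'), y) = L(x,y) and U(L(U(x,y), y'), y) = U(x,y) (for all x, y) are equivalent. -/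
theorem stmt10 {P : Type*} [PartialOrder P] (f : P → P) (z o : P)
    (h0 : ∀ x, z ≤ x) (h1 : ∀ x, x ≤ o)
    (hc1 : ∀ x : P, lowerBounds {x, f x} = {z})
    (hc2 : ∀ x : P, upperBounds {x, f x} = {o})
    (hant : ∀ x y : P, x ≤ y → f y ≤ f x)
    (hinv : ∀ x : P, f (f x) = x) :
    (∀ x y : P, lowerBounds (upperBounds (lowerBounds {x, y} ∪ {f y}) ∪ {y}) =
      lowerBounds {x, y}) ↔
    (∀ x y : P, upperBounds (lowerBounds (upperBounds {x, y} ∪ {f y}) ∪ {y}) =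
      upperBounds {x, y}) := by
  have hle : ∀ a b : P, a ≤ b ↔ f b ≤ f a := by
    intro a b
    constructor
    · exact hant a b
    · intro h
      have := hant _ _ h
      rwa [hinv, hinv] at this
  have himg : ∀ (u : P) (S : Set P), u ∈ f '' S ↔ f u ∈ S := by
    intro u S
    constructor
    · rintro ⟨s, hs, rfl⟩; rwa [hinv]
    · intro h; exact ⟨f u, h, hinv u⟩
  have hub : ∀ (u : P) (S : Set P), u ∈ upperBounds S ↔ f u ∈ lowerBounds (f '' S) := by
    intro u S
    constructor
    · rintro h a ⟨s, hs, rfl⟩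
      exact (hle s u).mp (h hs)
    · intro h s hs
      exact (hle s u).mpr (h ⟨s, hs, rfl⟩)
  have hlb : ∀ (u : P) (S : Set P), u ∈ lowerBounds S ↔ f u ∈ upperBounds (f '' S) := by
    intro u S
    constructor
    · rintro h a ⟨s, hs, rfl⟩
      exact (hle u s).mp (h hs)
    · intro h s hs
      exact (hle u s).mpr (h ⟨s, hs, rfl⟩)
  have hubset : ∀ S : Set P, f '' upperBounds S = lowerBounds (f '' S) := by
    intro S; ext u
    rw [himg, hub, hinv]
  have hlbset : ∀ S : Set P, f '' lowerBounds S = upperBounds (f '' S) := by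
    intro S; ext u
    rw [himg, hlb, hinv]
  constructor
  · intro H x y
    have himage : f '' (lowerBounds (upperBounds {x, y} ∪ {f y}) ∪ {y})
        = upperBounds (lowerBounds {f x, f y} ∪ {y}) ∪ {f y} := by
      rw [Set.image_union, Set.image_singleton, hlbset, Set.image_union,
        Set.image_singleton, hinv, hubset, Set.image_pair]
    have hH := H (f x) (f y)
    rw [hinv] at hH
    ext u
    rw [hub, himage, hH, ← Set.image_pair f x y, ← hub]
  · intro H x y
    have himage : f '' (upperBounds (lowerBounds {x, y} ∪ {f y}) ∪ {y})
        = lowerBounds (upperBounds {f x, f y} ∪ {y}) ∪ {f y} := by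
      rw [Set.image_union, Set.image_singleton, hubset, Set.image_union,
        Set.image_singleton, hinv, hlbset, Set.image_pair]
    have hH := H (f x) (f y)
    rw [hinv] at hH
    ext u
    rw [hlb, himage, hH, ← Set.image_pair f x y, ← hlb]
end

section
/- Every pseudo-Boolean poset is a pseudo-orthomodular poset. -/
theorem stmt11 {P : Type*} [PartialOrder P] (f : P → P) (z o : P)
    (h0 : ∀ x, z ≤ x) (h1 : ∀ x, x ≤ o)
    (hc1 : ∀ x : P, lowerBounds {x, f x} = {z})
    (hc2 : ∀ x : P, upperBounds {x, f x} = {o})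
    (hant : ∀ x y : P, x ≤ y → f y ≤ f x)
    (hinv : ∀ x : P, f (f x) = x)
    (hpb : ∀ x y : P, lowerBounds (upperBounds {x, y} ∪ {f y}) = lowerBounds {x, f y}) :
    ∀ x y : P, lowerBounds (upperBounds (lowerBounds {x, y} ∪ {f y}) ∪ {y}) =
      lowerBounds {x, y} := by
  intro x y
  have key := hpb x (f y)
  rw [hinv] at key
  apply Set.Subset.antisymm
  · intro t ht
    rw [← key]
    rintro u (hu | hu)
    · apply ht
      left
      rintro s (hs | hs)
      · exact le_trans (hs (Set.mem_insert x {y})) (hu (Set.mem_insert x {f y}))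
      · exact hs ▸ hu (Set.mem_insert_of_mem x rfl)
    · exact ht (Or.inr hu)
  · intro t ht
    rintro u (hu | hu)
    · exact hu (Or.inl ht)
    · exact hu ▸ ht (Set.mem_insert_of_mem x rfl)
end

section
/- Every Boolean poset (a poset with complementation that is distributive) is a pseudo-Boolean poset, i.e. satisfies L(U(x,y), y') = L(x,y') for all x, y. -/
lemma lul {P : Type*} [PartialOrder P] (s : Set P) :
    lowerBounds (upperBounds (lowerBounds s)) = lowerBounds s := by
  apply Set.Subset.antisymm
  · intro x hx y hy
    exact hx fun a ha => ha hy
  · intro x hx u hu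
    exact hu hx

theorem stmt12 {P : Type*} [PartialOrder P] (f : P → P) (z o : P)
    (h0 : ∀ x, z ≤ x) (h1 : ∀ x, x ≤ o)
    (hc1 : ∀ x : P, lowerBounds {x, f x} = {z})
    (hc2 : ∀ x : P, upperBounds {x, f x} = {o})
    (hant : ∀ x y : P, x ≤ y → f y ≤ f x)
    (hinv : ∀ x : P, f (f x) = x)
    (hdist : ∀ x y w : P, lowerBounds (upperBounds {x, y} ∪ {w}) =
      lowerBounds (upperBounds (lowerBounds {x, w} ∪ lowerBounds {y, w}))) :
    ∀ x y : P, lowerBounds (upperBounds {x, y} ∪ {f y}) = lowerBounds {x, f y} := by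
  intro x y
  rw [hdist x y (f y), hc1 y]
  have hz : lowerBounds {x, f y} ∪ {z} = lowerBounds {x, f y} := by
    apply Set.union_eq_self_of_subset_right
    intro a ha
    rcases ha with rfl
    intro b _
    exact h0 b
  rw [hz, lul]
end

section
/- If a poset with complementation is a lattice and satisfies the pseudo-orthomodular identity L(U(L(x,y), y'), y) = L(x,y) for all x, y, then it satisfies the orthomodular law ((x ∧ y) ∨ y') ∧ y = x ∧ y for all x, y. -/
lemma lb_pair {P : Type*} [Lattice P] (a b : P) :
    lowerBounds {a, b} = Set.Iic (a ⊓ b) := by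
  ext u
  simp [lowerBounds, Set.Iic, le_inf_iff]

lemma ub_Iic {P : Type*} [Lattice P] (a : P) :
    upperBounds (Set.Iic a) = Set.Ici a := by
  ext u
  constructor
  · exact fun h => h (le_refl a)
  · exact fun h x hx => le_trans hx h

lemma lb_Ici {P : Type*} [Lattice P] (a : P) :
    lowerBounds (Set.Ici a) = Set.Iic a := by
  ext u
  constructor
  · exact fun h => h (le_refl a)
  · exact fun h x hx => le_trans h hx

theorem stmt13 {P : Type*} [Lattice P] (f : P → P) (z o : P)
    (h0 : ∀ x, z ≤ x) (h1 : ∀ x, x ≤ o)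
    (hc1 : ∀ x : P, lowerBounds {x, f x} = {z})
    (hc2 : ∀ x : P, upperBounds {x, f x} = {o})
    (hant : ∀ x y : P, x ≤ y → f y ≤ f x)
    (hinv : ∀ x : P, f (f x) = x)
    (hpo : ∀ x y : P, lowerBounds (upperBounds (lowerBounds {x, y} ∪ {f y}) ∪ {y}) =
      lowerBounds {x, y}) :
    ∀ x y : P, ((x ⊓ y) ⊔ f y) ⊓ y = x ⊓ y := by
  intro x y
  have h := hpo x y
  rw [lb_pair, upperBounds_union, ub_Iic, upperBounds_singleton,
    Set.Ici_inter_Ici, lowerBounds_union, lb_Ici, lowerBounds_singleton,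
    Set.Iic_inter_Iic] at h
  exact Set.Iic_injective h
end

section
/- Let (P, ≤, ', 0, 1) be a pseudo-orthomodular poset, M(x,y) = L(U(x,y'), y), and R(x,y) = L(U(L(y,x), x')). Then for all x, y ∈ P: L((M(y',x))') = R(x,y) and L((R(y,x'))') = M(x,y), where for a subset A, A' = { a' : a ∈ A } and L(A') denotes its set of lower bounds. -/
theorem stmt14 {P : Type*} [PartialOrder P] (f : P → P) (z o : P)
    (h0 : ∀ x, z ≤ x) (h1 : ∀ x, x ≤ o)
    (hc1 : ∀ x : P, lowerBounds {x, f x} = {z})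
    (hc2 : ∀ x : P, upperBounds {x, f x} = {o})
    (hant : ∀ x y : P, x ≤ y → f y ≤ f x)
    (hinv : ∀ x : P, f (f x) = x)
    (hpo : ∀ x y : P, lowerBounds (upperBounds (lowerBounds {x, y} ∪ {f y}) ∪ {y}) =
      lowerBounds {x, y}) :
    ∀ x y : P,
      lowerBounds (f '' lowerBounds (upperBounds {f y, f x} ∪ {x})) =
        lowerBounds (upperBounds (lowerBounds {y, x} ∪ {f x})) ∧
      lowerBounds (f '' lowerBounds (upperBounds (lowerBounds {f x, y} ∪ {f y}))) =
        lowerBounds (upperBounds {x, f y} ∪ {y}) := by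
  have gal : ∀ a b : P, a ≤ f b ↔ b ≤ f a := by
    intro a b
    constructor <;> intro h <;> simpa [hinv] using hant _ _ h
  have imgimg : ∀ A : Set P, f '' (f '' A) = A := by
    intro A
    simp [Set.image_image, hinv]
  have Limg : ∀ A : Set P, lowerBounds (f '' A) = f '' (upperBounds A) := by
    intro A
    ext w
    constructor
    · intro hw
      exact ⟨f w, fun a ha => (gal w a).mp (hw ⟨a, ha, rfl⟩), hinv w⟩
    · rintro ⟨v, hv, rfl⟩ b ⟨a, ha, rfl⟩
      exact hant _ _ (hv ha)
  have Uimg : ∀ A : Set P, upperBounds (f '' A) = f '' (lowerBounds A) := by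
    intro A
    ext w
    constructor
    · intro hw
      refine ⟨f w, fun a ha => ?_, hinv w⟩
      have := hant _ _ (hw ⟨a, ha, rfl⟩)
      simpa [hinv] using this
    · rintro ⟨v, hv, rfl⟩ b ⟨a, ha, rfl⟩
      exact hant _ _ (hv ha)
  have LUL : ∀ A : Set P, lowerBounds (upperBounds (lowerBounds A)) = lowerBounds A := by
    intro A
    apply Set.Subset.antisymm
    · intro w hw a ha
      exact hw (fun b hb => hb ha)
    · intro w hw b hb
      exact hb hw
  intro x y
  constructor
  · have e1 : upperBounds {f y, f x} ∪ {x} =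
        f '' (lowerBounds {y, x} ∪ {f x}) := by
      rw [Set.image_union, ← Uimg]
      simp [Set.image_insert_eq, hinv]
    rw [e1, Limg (lowerBounds {y, x} ∪ {f x}), imgimg]
  · have e2 : lowerBounds {f x, y} ∪ {f y} =
        f '' (upperBounds {x, f y} ∪ {y}) := by
      rw [Set.image_union, ← Limg]
      simp [Set.image_insert_eq, hinv]
    rw [e2, Uimg (upperBounds {x, f y} ∪ {y}),
      Limg (lowerBounds (upperBounds {x, f y} ∪ {y})), imgimg, LUL]
end

section
/- Let (P, ≤, ', 0, 1) be a poset with complementation, M(x,y) = L(x,y), and R(x,y) = L(U(y,x')). Then for all x, y ∈ P: L((M(y',x))') = R(x,y) and L((R(y,x'))') = M(x,y), where A' = { a' : a ∈ A } for subsets A. -/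
theorem stmt15 {P : Type*} [PartialOrder P] (f : P → P) (z o : P)
    (h0 : ∀ x, z ≤ x) (h1 : ∀ x, x ≤ o)
    (hc1 : ∀ x : P, lowerBounds {x, f x} = {z})
    (hc2 : ∀ x : P, upperBounds {x, f x} = {o})
    (hant : ∀ x y : P, x ≤ y → f y ≤ f x)
    (hinv : ∀ x : P, f (f x) = x) :
    ∀ x y : P,
      lowerBounds (f '' lowerBounds {f y, x}) = lowerBounds (upperBounds {y, f x}) ∧
      lowerBounds (f '' lowerBounds (upperBounds {f x, f y})) = lowerBounds ({x, y} : Set P) := by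
  have hle : ∀ a b : P, f a ≤ b ↔ f b ≤ a := by
    intro a b
    constructor
    · intro h
      have := hant _ _ h
      rwa [hinv] at this
    · intro h
      have := hant _ _ h
      rwa [hinv] at this
  have hL : ∀ S : Set P, f '' lowerBounds S = upperBounds (f '' S) := by
    intro S
    ext b
    constructor
    · rintro ⟨a, ha, rfl⟩
      rintro c ⟨s, hs, rfl⟩
      exact hant _ _ (ha hs)
    · intro hb
      refine ⟨f b, ?_, hinv b⟩
      intro s hs
      rw [← hinv s]
      exact hant _ _ (hb ⟨s, hs, rfl⟩)
  have hU : ∀ S : Set P, f '' upperBounds S = lowerBounds (f '' S) := by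
    intro S
    ext b
    constructor
    · rintro ⟨a, ha, rfl⟩
      rintro c ⟨s, hs, rfl⟩
      exact hant _ _ (ha hs)
    · intro hb
      refine ⟨f b, ?_, hinv b⟩
      intro s hs
      rw [← hinv s]
      exact hant _ _ (hb ⟨s, hs, rfl⟩)
  have himg : ∀ a b : P, f '' ({a, b} : Set P) = {f a, f b} := by
    intro a b; simp [Set.image_insert_eq]
  have hLUL : ∀ S : Set P,
      lowerBounds (upperBounds (lowerBounds S)) = lowerBounds S := by
    intro S
    apply le_antisymm
    · intro b hb s hs
      exact hb (fun c hc => hc hs)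
    · intro b hb c hc
      exact hc hb
  intro x y
  constructor
  · rw [hL, himg, hinv]
  · rw [hL, hU, himg, hinv, hinv, hLUL]
end

section
/- Let (P, ≤, ') be a poset with a unary operation; for subsets define A' = {a' : a ∈ A}, M(A,B) = L(A ∪ B), and R(A,B) = L(U(B ∪ A')). Then the condition 'L(U(A, B'), B) ⊆ L(A) for all A, B ⊆ P' is equivalent to the condition 'for all A, B, C ⊆ P, L(A) ⊆ R(B,C) implies M(A,B) ⊆ L(C)'. -/
theorem stmt17 {P : Type*} [PartialOrder P] (f : P → P) :
    (∀ A B : Set P, lowerBounds (upperBounds (A ∪ f '' B) ∪ B) ⊆ lowerBounds A) ↔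
    (∀ A B C : Set P, lowerBounds A ⊆ lowerBounds (upperBounds (C ∪ f '' B)) →
      lowerBounds (A ∪ B) ⊆ lowerBounds C) := by
  constructor
  · intro H A B C h x hx
    rw [lowerBounds_union] at hx
    exact H C B (by rw [lowerBounds_union]; exact ⟨h hx.1, hx.2⟩)
  · intro H A B
    exact H (upperBounds (A ∪ f '' B)) B A (fun x hx => hx)
end

section
/- In an orthomodular lattice (L, ∨, ∧, ', 0, 1), defining x ⊙ y := (x ∨ y') ∧ y and x → y := (y ∧ x) ∨ x', we obtain a left residuated lattice: x ⊙ 1 = 1 ⊙ x = x for all x, and x ⊙ y ≤ z if and only if x ≤ y → z, for all x, y, z; moreover x → 0 = x'. -/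
theorem stmt19 {P : Type*} [Lattice P] [BoundedOrder P] (f : P → P)
    (hc1 : ∀ x : P, x ⊓ f x = ⊥)
    (hc2 : ∀ x : P, x ⊔ f x = ⊤)
    (hant : ∀ x y : P, x ≤ y → f y ≤ f x)
    (hinv : ∀ x : P, f (f x) = x)
    (hom : ∀ x y : P, x ≤ y → y = x ⊔ (y ⊓ f x)) :
    (∀ x : P, (x ⊔ f ⊤) ⊓ ⊤ = x) ∧
    (∀ x : P, (⊤ ⊔ f x) ⊓ x = x) ∧
    (∀ x y w : P, (x ⊔ f y) ⊓ y ≤ w ↔ x ≤ (w ⊓ y) ⊔ f y) ∧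
    (∀ x : P, (⊥ ⊓ x) ⊔ f x = f x) := by
  have hftop : f ⊤ = ⊥ := by
    have := hc1 ⊤; simpa using this
  -- De Morgan
  have hdm : ∀ x y : P, f (x ⊔ y) = f x ⊓ f y := by
    intro x y
    apply le_antisymm
    · exact le_inf (hant _ _ le_sup_left) (hant _ _ le_sup_right)
    · have h1 : x ⊔ y ≤ f (f x ⊓ f y) := by
        apply sup_le
        · have := hant _ _ (inf_le_left : f x ⊓ f y ≤ f x); rwa [hinv] at this
        · have := hant _ _ (inf_le_right : f x ⊓ f y ≤ f y); rwa [hinv] at this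
      have := hant _ _ h1
      rwa [hinv] at this
  -- key: a ≤ y → (a ⊔ f y) ⊓ y = a
  have key : ∀ a y : P, a ≤ y → (a ⊔ f y) ⊓ y = a := by
    intro a y hay
    have hfy : f y ≤ f a := hant _ _ hay
    have hfa : f a = f y ⊔ (f a ⊓ y) := by
      have := hom _ _ hfy
      rwa [hinv] at this
    have hfb : f ((a ⊔ f y) ⊓ y) = f a := by
      have h1 : f ((a ⊔ f y) ⊓ y) = f (a ⊔ f y) ⊔ f y := by
        have : (a ⊔ f y) ⊓ y = f (f (a ⊔ f y) ⊔ f y) := by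
          rw [hdm, hinv, hinv]
        rw [this, hinv]
      rw [h1, hdm, hinv]
      exact (sup_comm _ _).trans hfa.symm
    have := congrArg f hfb
    rwa [hinv, hinv] at this
  refine ⟨?_, ?_, ?_, ?_⟩
  · intro x; simp [hftop]
  · intro x; simp
  · intro x y w
    constructor
    · intro h
      have h2 : x ⊔ f y = f y ⊔ ((x ⊔ f y) ⊓ y) := by
        have := hom (f y) (x ⊔ f y) le_sup_right
        rwa [hinv] at this
      have h3 : x ≤ f y ⊔ ((x ⊔ f y) ⊓ y) := h2 ▸ le_sup_left
      have h4 : (x ⊔ f y) ⊓ y ≤ w ⊓ y := le_inf h inf_le_right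
      calc x ≤ f y ⊔ ((x ⊔ f y) ⊓ y) := h3
        _ ≤ f y ⊔ (w ⊓ y) := sup_le_sup_left h4 _
        _ = (w ⊓ y) ⊔ f y := sup_comm _ _
    · intro h
      have h1 : x ⊔ f y ≤ (w ⊓ y) ⊔ f y := sup_le h le_sup_right
      have h2 : (x ⊔ f y) ⊓ y ≤ ((w ⊓ y) ⊔ f y) ⊓ y := inf_le_inf_right _ h1
      rw [key (w ⊓ y) y inf_le_right] at h2
      exact h2.trans inf_le_left
  · intro x; simp
end
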